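/- Fix T > 0, ω₀ > 0 and parameters ε, β, γ, ρ with ε > 0, β > 0, γ > 1. For each ω ≥ ω₀ let φ_slow, φ_fast, φ₂, HF₁, HF₂ ∈ C([0,T];ℝ) (possibly depending on ω) satisfy: (i) (1/γ)·sup_{t∈[0,T]} ∫₀ᵗ exp(∫_τᵗ (φ_slow(s) + φ_fast(s)) ds) dτ < 1/2; (ii) sup_{t∈[0,T]} |∫₀ᵗ exp(∫_τᵗ (φ_slow(s) + φ_fast(s)) ds)·HF₁(τ) dτ| ≤ C₁/ω; (iii) sup_{t∈[0,T]} |∫₀ᵗ e^{−εγ(t−τ)}·HF₂(τ) dτ| ≤ C₂/ω; (iv) sup_{t∈[0,T]} |φ₂(t)| ≤ K₂; where C₁ = C₁(T,ω₀) > 0, C₂ = C₂(T,ω₀) > 0, K₂ = K₂(T) > 0 are constants independent of ω. Then there exist ω* ≥ ω₀ and a constant C = C(C₁,C₂,γ) > 0 such that for all ω ≥ ω*, the solution (E_v, E_w) ∈ C([0,T];ℝ²) ∩ C¹((0,T);ℝ²) of the system E_v′ = (φ_slow + φ_fast)E_v + φ₂E_v² − (1/3)E_v³ − E_w + HF₁,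 E_w′ = ε(E_v − γE_w) + HF₂ with E_v(0) = 0, E_w(0) = 0 satisfies |E_v(t)| ≤ C/ω and |E_w(t)| ≤ C/ω for all t ∈ (0,T). -/

import Mathlib

open Set intervalIntegral

section helpers
open MeasureTheory Filter Topology

lemma myInt {T : ℝ} (hT : 0 < T) {f : ℝ → ℝ} (hf : ContinuousOn f (Icc 0 T))
    {u v : ℝ} (hu : u ∈ Icc (0:ℝ) T) (hv : v ∈ Icc (0:ℝ) T) :
    IntervalIntegrable f MeasureTheory.volume u v := by
  apply ContinuousOn.intervalIntegrable
  exact hf.mono (uIcc_subset_Icc hu hv)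

lemma prim_cont {T : ℝ} (hT : 0 < T) {f : ℝ → ℝ} (hf : ContinuousOn f (Icc 0 T)) :
    ContinuousOn (fun t => ∫ s in (0:ℝ)..t, f s) (Icc 0 T) := by
  have h := continuousOn_primitive_interval (a := (0:ℝ)) (b := T) (μ := volume)
    (f := f) ?_
  · rwa [uIcc_of_le hT.le] at h
  · rw [uIcc_of_le hT.le]; exact hf.integrableOn_Icc

lemma prim_deriv {T : ℝ} (hT : 0 < T) {f : ℝ → ℝ} (hf : ContinuousOn f (Icc 0 T))
    {x : ℝ} (hx : x ∈ Ioo (0:ℝ) T) :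
    HasDerivAt (fun t => ∫ s in (0:ℝ)..t, f s) (f x) x := by
  have hxI : x ∈ Icc (0:ℝ) T := Ioo_subset_Icc_self hx
  refine intervalIntegral.integral_hasDerivAt_right
    (myInt hT hf (left_mem_Icc.2 hT.le) hxI) ?_ ?_
  · exact (hf.mono Ioo_subset_Icc_self).stronglyMeasurableAtFilter isOpen_Ioo x hx
  · exact hf.continuousAt (Icc_mem_nhds hx.1 hx.2)

/-- Duhamel / variation of constants formula. -/
lemma duhamel {T : ℝ} (hT : 0 < T) (a N y : ℝ → ℝ)
    (ha : ContinuousOn a (Icc 0 T)) (hN : ContinuousOn N (Icc 0 T))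
    (hy : ContinuousOn y (Icc 0 T)) (hy0 : y 0 = 0)
    (hderiv : ∀ x ∈ Ioo (0:ℝ) T, HasDerivAt y (a x * y x + N x) x) :
    ∀ t ∈ Icc (0:ℝ) T, y t =
      Real.exp (∫ s in (0:ℝ)..t, a s) *
        ∫ τ in (0:ℝ)..t, Real.exp (-(∫ s in (0:ℝ)..τ, a s)) * N τ := by
  set F : ℝ → ℝ := fun t => ∫ s in (0:ℝ)..t, a s with hF
  set P : ℝ → ℝ := fun τ => Real.exp (-(F τ)) with hP
  have hFc : ContinuousOn F (Icc 0 T) := prim_cont hT ha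
  have hPc : ContinuousOn P (Icc 0 T) := (Real.continuous_exp.comp_continuousOn hFc.neg)
  have hPNc : ContinuousOn (fun τ => P τ * N τ) (Icc 0 T) := hPc.mul hN
  set G : ℝ → ℝ := fun t => ∫ τ in (0:ℝ)..t, P τ * N τ with hG
  have hGc : ContinuousOn G (Icc 0 T) := prim_cont hT hPNc
  set g : ℝ → ℝ := fun t => P t * y t - G t with hg
  have hgc : ContinuousOn g (Icc 0 T) := (hPc.mul hy).sub hGc
  have hgd : ∀ x ∈ Ioo (0:ℝ) T, HasDerivAt g 0 x := by
    intro x hx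
    have hFd : HasDerivAt F (a x) x := prim_deriv hT ha hx
    have hPd : HasDerivAt P (Real.exp (-(F x)) * (-(a x))) x := hFd.neg.exp
    have hGd : HasDerivAt G (P x * N x) x := prim_deriv hT hPNc hx
    have hyd : HasDerivAt y (a x * y x + N x) x := hderiv x hx
    have h1 : HasDerivAt (fun t => P t * y t)
        (Real.exp (-(F x)) * (-(a x)) * y x + P x * (a x * y x + N x)) x := hPd.mul hyd
    have h2 := h1.sub hGd
    refine h2.congr_deriv ?_
    simp only [hP]
    ring
  intro t ht
  rcases eq_or_lt_of_le ht.1 with h0 | h0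
  · simp [← h0, hy0]
  · have key : (∫ _x in (0:ℝ)..t, (0:ℝ)) = g t - g 0 := by
      apply intervalIntegral.integral_eq_sub_of_hasDeriv_right_of_le h0.le
      · exact hgc.mono (Icc_subset_Icc le_rfl ht.2)
      · intro x hx
        exact (hgd x ⟨hx.1, lt_of_lt_of_le hx.2 ht.2⟩).hasDerivWithinAt
      · exact intervalIntegrable_const
    have hF0 : F 0 = 0 := intervalIntegral.integral_same
    have hg0 : g 0 = 0 := by
      simp [hg, hG, hP, hF0, hy0]
    rw [intervalIntegral.integral_zero, hg0, sub_zero] at key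
    have hgt : P t * y t = G t := by
      have := key.symm
      simpa [hg, sub_eq_zero] using this
    have hPt : Real.exp (F t) * P t = 1 := by
      rw [hP]; simp [← Real.exp_add]
    calc y t = (Real.exp (F t) * P t) * y t := by rw [hPt, one_mul]
    _ = Real.exp (F t) * (P t * y t) := by ring
    _ = Real.exp (F t) * G t := by rw [hgt]

/-- rewrite `∫₀ᵗ exp(∫_τ^t a) h τ dτ` as `exp(F t) ∫₀ᵗ exp(-F τ) h τ dτ`. -/
lemma exp_shift {T : ℝ} (hT : 0 < T) (a h : ℝ → ℝ)
    (ha : ContinuousOn a (Icc 0 T)) {t : ℝ} (ht : t ∈ Icc (0:ℝ) T) :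
    (∫ τ in (0:ℝ)..t, Real.exp (∫ s in τ..t, a s) * h τ)
      = Real.exp (∫ s in (0:ℝ)..t, a s) *
          ∫ τ in (0:ℝ)..t, Real.exp (-(∫ s in (0:ℝ)..τ, a s)) * h τ := by
  rw [← intervalIntegral.integral_const_mul]
  apply intervalIntegral.integral_congr
  intro τ hτ
  rw [uIcc_of_le ht.1] at hτ
  have hτI : τ ∈ Icc (0:ℝ) T := ⟨hτ.1, le_trans hτ.2 ht.2⟩
  have hadd : (∫ s in (0:ℝ)..τ, a s) + (∫ s in τ..t, a s) = ∫ s in (0:ℝ)..t, a s :=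
    intervalIntegral.integral_add_adjacent_intervals
      (myInt hT ha (left_mem_Icc.2 hT.le) hτI) (myInt hT ha hτI ht)
  simp only
  rw [← mul_assoc, ← Real.exp_add]
  congr 2
  linarith

-- integral of the exponential kernel
lemma Iexp {ε γ t : ℝ} (hε : 0 < ε) (hγ : 1 < γ) (ht : 0 ≤ t) :
    (∫ τ in (0:ℝ)..t, Real.exp (-(ε*γ)*(t-τ))) ≤ 1/(ε*γ) := by
  have hεγ : 0 < ε*γ := mul_pos hε (lt_trans one_pos hγ)
  have hder : ∀ τ : ℝ, HasDerivAt (fun τ => Real.exp (-(ε*γ)*(t-τ)) / (ε*γ))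
      (Real.exp (-(ε*γ)*(t-τ))) τ := by
    intro τ
    have h1 : HasDerivAt (fun τ : ℝ => -(ε*γ)*(t-τ)) (ε*γ) τ := by
      have := ((hasDerivAt_id τ).const_sub t).const_mul (-(ε*γ))
      refine this.congr_deriv ?_
      ring
    have h2 := (h1.exp).div_const (ε*γ)
    refine h2.congr_deriv ?_
    rw [mul_div_cancel_right₀ _ hεγ.ne']
  have hint : (∫ τ in (0:ℝ)..t, Real.exp (-(ε*γ)*(t-τ)))
      = Real.exp (-(ε*γ)*(t-t)) / (ε*γ) - Real.exp (-(ε*γ)*(t-0)) / (ε*γ) := by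
    refine intervalIntegral.integral_eq_sub_of_hasDerivAt
      (f := fun τ => Real.exp (-(ε*γ)*(t-τ)) / (ε*γ)) (fun x _ => hder x) ?_
    apply Continuous.intervalIntegrable
    have : Continuous (fun τ : ℝ => -(ε*γ)*(t-τ)) := by continuity
    exact Real.continuous_exp.comp this
  rw [hint]
  simp only [sub_self, mul_zero, Real.exp_zero, sub_zero]
  have h3 : 0 ≤ Real.exp (-(ε*γ)*t) / (ε*γ) := by positivity
  calc 1/(ε*γ) - Real.exp (-(ε*γ)*t) / (ε*γ) ≤ 1/(ε*γ) := by linarith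

-- Ew formula
lemma ew_formula' {T ε γ : ℝ} (hT : 0 < T) (hε : 0 < ε) (hγ : 1 < γ)
    {H₂ Ev Ew : ℝ → ℝ}
    (hH₂c : ContinuousOn H₂ (Icc 0 T))
    (hEvc : ContinuousOn Ev (Icc 0 T)) (hEwc : ContinuousOn Ew (Icc 0 T))
    (hEw0 : Ew 0 = 0)
    (hdEw : ∀ t ∈ Ioo (0:ℝ) T, HasDerivAt Ew ((-(ε*γ)) * Ew t + (ε * Ev t + H₂ t)) t) :
    ∀ t ∈ Icc (0:ℝ) T,
      Ew t = ∫ τ in (0:ℝ)..t, Real.exp (-(ε*γ)*(t-τ)) * (ε * Ev τ + H₂ τ) := by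
  intro t ht
  have hconst : ∀ u : ℝ, (∫ s in (0:ℝ)..u, (fun _ => -(ε*γ)) s) = -(ε*γ)*u := by
    intro u
    rw [intervalIntegral.integral_const, smul_eq_mul]; ring
  have hd := duhamel hT (fun _ => -(ε*γ)) (fun τ => ε * Ev τ + H₂ τ) Ew
    continuousOn_const ((continuousOn_const.mul hEvc).add hH₂c) hEwc hEw0 hdEw t ht
  rw [hd, hconst, ← intervalIntegral.integral_const_mul]
  apply intervalIntegral.integral_congr
  intro τ hτ
  simp only [hconst]
  rw [← mul_assoc, ← Real.exp_add]
  congr 2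
  ring

lemma ew_bound_lem {T ε γ D₂ : ℝ} (hT : 0 < T) (hε : 0 < ε) (hγ : 1 < γ)
    {H₂ Ev Ew : ℝ → ℝ}
    (hH₂c : ContinuousOn H₂ (Icc 0 T)) (hEvc : ContinuousOn Ev (Icc 0 T))
    (hfor : ∀ t ∈ Icc (0:ℝ) T,
      Ew t = ∫ τ in (0:ℝ)..t, Real.exp (-(ε*γ)*(t-τ)) * (ε * Ev τ + H₂ τ))
    (hH2 : ∀ t ∈ Icc (0:ℝ) T, |∫ τ in (0:ℝ)..t, Real.exp (-(ε*γ)*(t-τ)) * H₂ τ| ≤ D₂) :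
    ∀ m, 0 ≤ m → ∀ t ∈ Icc (0:ℝ) T,
      (∀ τ ∈ Icc (0:ℝ) t, |Ev τ| ≤ m) → |Ew t| ≤ m/γ + D₂ := by
  intro m hm0 t ht hm
  have hsub : Icc (0:ℝ) t ⊆ Icc 0 T := Icc_subset_Icc le_rfl ht.2
  have hec : Continuous (fun τ : ℝ => Real.exp (-(ε*γ)*(t-τ))) := by
    apply Real.continuous_exp.comp; continuity
  have int1 : IntervalIntegrable (fun τ => Real.exp (-(ε*γ)*(t-τ)) * (ε * Ev τ))
      volume 0 t := by
    apply ContinuousOn.intervalIntegrable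
    rw [uIcc_of_le ht.1]
    exact hec.continuousOn.mul ((continuousOn_const.mul hEvc).mono hsub)
  have int2 : IntervalIntegrable (fun τ => Real.exp (-(ε*γ)*(t-τ)) * H₂ τ)
      volume 0 t := by
    apply ContinuousOn.intervalIntegrable
    rw [uIcc_of_le ht.1]
    exact hec.continuousOn.mul (hH₂c.mono hsub)
  have hsplit : Ew t = (∫ τ in (0:ℝ)..t, Real.exp (-(ε*γ)*(t-τ)) * (ε * Ev τ))
      + ∫ τ in (0:ℝ)..t, Real.exp (-(ε*γ)*(t-τ)) * H₂ τ := by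
    rw [hfor t ht, ← intervalIntegral.integral_add int1 int2]
    apply intervalIntegral.integral_congr
    intro τ _
    ring
  have habs1 : |∫ τ in (0:ℝ)..t, Real.exp (-(ε*γ)*(t-τ)) * (ε * Ev τ)| ≤ m/γ := by
    have h1 : |∫ τ in (0:ℝ)..t, Real.exp (-(ε*γ)*(t-τ)) * (ε * Ev τ)|
        ≤ ∫ τ in (0:ℝ)..t, |Real.exp (-(ε*γ)*(t-τ)) * (ε * Ev τ)| :=
      intervalIntegral.abs_integral_le_integral_abs ht.1
    have h2 : (∫ τ in (0:ℝ)..t, |Real.exp (-(ε*γ)*(t-τ)) * (ε * Ev τ)|)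
        ≤ ∫ τ in (0:ℝ)..t, Real.exp (-(ε*γ)*(t-τ)) * (ε * m) := by
      apply intervalIntegral.integral_mono_on ht.1 int1.abs
      · exact (hec.mul continuous_const).intervalIntegrable 0 t
      · intro x hx
        rw [abs_mul, abs_mul, abs_of_pos (Real.exp_pos _), abs_of_pos hε]
        have h3 := mul_le_mul_of_nonneg_left (hm x hx) hε.le
        nlinarith [Real.exp_pos (-(ε*γ)*(t-x))]
    have h3 : (∫ τ in (0:ℝ)..t, Real.exp (-(ε*γ)*(t-τ)) * (ε * m))
        = (∫ τ in (0:ℝ)..t, Real.exp (-(ε*γ)*(t-τ))) * (ε * m) :=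
      intervalIntegral.integral_mul_const _ _
    have h4 := Iexp (t := t) hε hγ ht.1
    have h5 : (∫ τ in (0:ℝ)..t, Real.exp (-(ε*γ)*(t-τ))) * (ε * m)
        ≤ (1/(ε*γ)) * (ε * m) :=
      mul_le_mul_of_nonneg_right h4 (by positivity)
    have h6 : (1/(ε*γ)) * (ε * m) = m/γ := by
      field_simp
    linarith
  calc |Ew t| ≤ |∫ τ in (0:ℝ)..t, Real.exp (-(ε*γ)*(t-τ)) * (ε * Ev τ)|
        + |∫ τ in (0:ℝ)..t, Real.exp (-(ε*γ)*(t-τ)) * H₂ τ| := by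
          rw [hsplit]; exact abs_add_le _ _
  _ ≤ m/γ + D₂ := add_le_add habs1 (hH2 t ht)

lemma key_lem {T γ K₂ S D₁ D₂ : ℝ} (hT : 0 < T) (hγ : 1 < γ) (hK₂ : 0 < K₂)
    {φ φ₂ H₁ Ev Ew : ℝ → ℝ}
    (hφ : ContinuousOn φ (Icc 0 T)) (hφ₂c : ContinuousOn φ₂ (Icc 0 T))
    (hH₁c : ContinuousOn H₁ (Icc 0 T))
    (hEvc : ContinuousOn Ev (Icc 0 T)) (hEwc : ContinuousOn Ew (Icc 0 T))
    (hd : ∀ t ∈ Icc (0:ℝ) T, Ev t =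
      Real.exp (∫ s in (0:ℝ)..t, φ s) *
        ∫ τ in (0:ℝ)..t, Real.exp (-(∫ s in (0:ℝ)..τ, φ s)) *
          (φ₂ τ * Ev τ ^ 2 - 1/3 * Ev τ ^ 3 - Ew τ + H₁ τ))
    (hS : ∀ t ∈ Icc (0:ℝ) T, (∫ τ in (0:ℝ)..t, Real.exp (∫ s in τ..t, φ s)) ≤ S)
    (hH1 : ∀ t ∈ Icc (0:ℝ) T, |∫ τ in (0:ℝ)..t, Real.exp (∫ s in τ..t, φ s) * H₁ τ| ≤ D₁)
    (hK : ∀ t ∈ Icc (0:ℝ) T, |φ₂ t| ≤ K₂)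
    (hEwb : ∀ m, 0 ≤ m → ∀ t ∈ Icc (0:ℝ) T,
      (∀ τ ∈ Icc (0:ℝ) t, |Ev τ| ≤ m) → |Ew t| ≤ m/γ + D₂)
    (hD₂ : 0 ≤ D₂) :
    ∀ m, 0 ≤ m → ∀ t ∈ Icc (0:ℝ) T,
      (∀ τ ∈ Icc (0:ℝ) t, |Ev τ| ≤ m) →
      |Ev t| ≤ S*(K₂*m^2 + m^3/3 + (m/γ + D₂)) + D₁ := by
  have hγ0 : 0 < γ := lt_trans one_pos hγ
  have hFc : ContinuousOn (fun t => ∫ s in (0:ℝ)..t, φ s) (Icc 0 T) := prim_cont hT hφ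
  have hPc : ContinuousOn (fun τ => Real.exp (-(∫ s in (0:ℝ)..τ, φ s))) (Icc 0 T) :=
    Real.continuous_exp.comp_continuousOn hFc.neg
  have hA : ∀ t ∈ Icc (0:ℝ) T, Real.exp (∫ s in (0:ℝ)..t, φ s) *
      (∫ τ in (0:ℝ)..t, Real.exp (-(∫ s in (0:ℝ)..τ, φ s))) ≤ S := by
    intro t ht
    have h := exp_shift hT φ (fun _ => (1:ℝ)) hφ ht
    simp only [mul_one] at h
    rw [← h]
    exact hS t ht
  intro m hm0 t ht hm
  have hsub : Icc (0:ℝ) t ⊆ Icc 0 T := Icc_subset_Icc le_rfl ht.2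
  have hN₀c : ContinuousOn (fun τ => φ₂ τ * Ev τ ^ 2 - 1/3 * Ev τ ^ 3 - Ew τ)
      (Icc 0 T) :=
    ((hφ₂c.mul (hEvc.pow 2)).sub (continuousOn_const.mul (hEvc.pow 3))).sub hEwc
  have int1 : IntervalIntegrable (fun τ => Real.exp (-(∫ s in (0:ℝ)..τ, φ s)) *
      (φ₂ τ * Ev τ ^ 2 - 1/3 * Ev τ ^ 3 - Ew τ)) volume 0 t := by
    apply ContinuousOn.intervalIntegrable
    rw [uIcc_of_le ht.1]
    exact (hPc.mul hN₀c).mono hsub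
  have int2 : IntervalIntegrable (fun τ => Real.exp (-(∫ s in (0:ℝ)..τ, φ s)) * H₁ τ)
      volume 0 t := by
    apply ContinuousOn.intervalIntegrable
    rw [uIcc_of_le ht.1]
    exact (hPc.mul hH₁c).mono hsub
  have hsum : Ev t = Real.exp (∫ s in (0:ℝ)..t, φ s) *
        (∫ τ in (0:ℝ)..t, Real.exp (-(∫ s in (0:ℝ)..τ, φ s)) *
          (φ₂ τ * Ev τ ^ 2 - 1/3 * Ev τ ^ 3 - Ew τ))
      + ∫ τ in (0:ℝ)..t, Real.exp (∫ s in τ..t, φ s) * H₁ τ := by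
    rw [hd t ht, exp_shift hT φ H₁ hφ ht, ← mul_add,
      ← intervalIntegral.integral_add int1 int2]
    congr 1
    apply intervalIntegral.integral_congr
    intro τ _
    ring
  have hc0 : 0 ≤ K₂*m^2 + m^3/3 + (m/γ + D₂) := by positivity
  have hpt : ∀ x ∈ Icc (0:ℝ) t, |Real.exp (-(∫ s in (0:ℝ)..x, φ s)) *
      (φ₂ x * Ev x ^ 2 - 1/3 * Ev x ^ 3 - Ew x)|
      ≤ Real.exp (-(∫ s in (0:ℝ)..x, φ s)) * (K₂*m^2 + m^3/3 + (m/γ + D₂)) := by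
    intro x hx
    have hxT : x ∈ Icc (0:ℝ) T := hsub hx
    have hEvx := hm x hx
    have hEwx : |Ew x| ≤ m/γ + D₂ := by
      apply hEwb m hm0 x hxT
      intro τ hτ
      exact hm τ (Icc_subset_Icc le_rfl hx.2 hτ)
    have hφ₂x := hK x hxT
    have habs : |φ₂ x * Ev x ^ 2 - 1/3 * Ev x ^ 3 - Ew x|
        ≤ K₂*m^2 + m^3/3 + (m/γ + D₂) := by
      have e1 : |φ₂ x * Ev x ^ 2| ≤ K₂ * m^2 := by
        rw [abs_mul, abs_pow]
        exact mul_le_mul hφ₂x (pow_le_pow_left₀ (abs_nonneg _) hEvx 2)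
          (by positivity) hK₂.le
      have e2 : |1/3 * Ev x ^ 3| ≤ m^3/3 := by
        rw [abs_mul, abs_pow]
        have := pow_le_pow_left₀ (abs_nonneg _) hEvx 3
        rw [abs_of_pos (by norm_num : (0:ℝ) < 1/3)]
        linarith
      calc |φ₂ x * Ev x ^ 2 - 1/3 * Ev x ^ 3 - Ew x|
          ≤ |φ₂ x * Ev x ^ 2 - 1/3 * Ev x ^ 3| + |Ew x| := abs_sub _ _
      _ ≤ (|φ₂ x * Ev x ^ 2| + |1/3 * Ev x ^ 3|) + |Ew x| :=
          add_le_add_left (abs_sub _ _) _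
      _ ≤ K₂*m^2 + m^3/3 + (m/γ + D₂) := by linarith
    rw [abs_mul, abs_of_pos (Real.exp_pos _)]
    exact mul_le_mul_of_nonneg_left habs (Real.exp_pos _).le
  have hmain : |Real.exp (∫ s in (0:ℝ)..t, φ s) *
        (∫ τ in (0:ℝ)..t, Real.exp (-(∫ s in (0:ℝ)..τ, φ s)) *
          (φ₂ τ * Ev τ ^ 2 - 1/3 * Ev τ ^ 3 - Ew τ))|
      ≤ S * (K₂*m^2 + m^3/3 + (m/γ + D₂)) := by
    rw [abs_mul, abs_of_pos (Real.exp_pos _)]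
    have g1 : |∫ τ in (0:ℝ)..t, Real.exp (-(∫ s in (0:ℝ)..τ, φ s)) *
          (φ₂ τ * Ev τ ^ 2 - 1/3 * Ev τ ^ 3 - Ew τ)|
        ≤ ∫ τ in (0:ℝ)..t, Real.exp (-(∫ s in (0:ℝ)..τ, φ s)) *
            (K₂*m^2 + m^3/3 + (m/γ + D₂)) := by
      refine le_trans (intervalIntegral.abs_integral_le_integral_abs ht.1) ?_
      apply intervalIntegral.integral_mono_on ht.1 int1.abs ?_ hpt
      apply ContinuousOn.intervalIntegrable
      rw [uIcc_of_le ht.1]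
      exact (hPc.mul continuousOn_const).mono hsub
    have g2 : (∫ τ in (0:ℝ)..t, Real.exp (-(∫ s in (0:ℝ)..τ, φ s)) *
          (K₂*m^2 + m^3/3 + (m/γ + D₂)))
        = (∫ τ in (0:ℝ)..t, Real.exp (-(∫ s in (0:ℝ)..τ, φ s))) *
            (K₂*m^2 + m^3/3 + (m/γ + D₂)) :=
      intervalIntegral.integral_mul_const _ _
    have g3 := mul_le_mul_of_nonneg_left (g1.trans (le_of_eq g2))
      (Real.exp_pos (∫ s in (0:ℝ)..t, φ s)).le
    refine g3.trans ?_
    rw [← mul_assoc]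
    exact mul_le_mul_of_nonneg_right (hA t ht) hc0
  calc |Ev t| ≤ |Real.exp (∫ s in (0:ℝ)..t, φ s) *
        (∫ τ in (0:ℝ)..t, Real.exp (-(∫ s in (0:ℝ)..τ, φ s)) *
          (φ₂ τ * Ev τ ^ 2 - 1/3 * Ev τ ^ 3 - Ew τ))|
      + |∫ τ in (0:ℝ)..t, Real.exp (∫ s in τ..t, φ s) * H₁ τ| := by
        rw [hsum]; exact abs_add_le _ _
  _ ≤ S * (K₂*m^2 + m^3/3 + (m/γ + D₂)) + D₁ := add_le_add hmain (hH1 t ht)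

lemma Abdd {T : ℝ} (hT : 0 < T) {φ : ℝ → ℝ} (hφ : ContinuousOn φ (Icc 0 T)) :
    BddAbove (Set.range fun t : Icc (0:ℝ) T =>
      ∫ τ in (0:ℝ)..(t:ℝ), Real.exp (∫ s in τ..(t:ℝ), φ s)) := by
  have hFc := prim_cont hT hφ
  obtain ⟨B₀, hB₀⟩ := isCompact_Icc.exists_bound_of_continuousOn hFc
  refine ⟨Real.exp B₀ * (T * Real.exp B₀), ?_⟩
  rintro x ⟨⟨t, ht⟩, rfl⟩
  simp only
  have h1 : (∫ τ in (0:ℝ)..t, Real.exp (∫ s in τ..t, φ s))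
      = ∫ τ in (0:ℝ)..t, Real.exp (∫ s in τ..t, φ s) * (fun _ => (1:ℝ)) τ := by
    simp
  rw [h1, exp_shift hT φ (fun _ => 1) hφ ht]
  simp only [mul_one]
  have hB : ∀ x ∈ Icc (0:ℝ) T, |∫ s in (0:ℝ)..x, φ s| ≤ B₀ := by
    intro x hx
    have := hB₀ x hx
    simpa [Real.norm_eq_abs] using this
  have hexpF : Real.exp (∫ s in (0:ℝ)..t, φ s) ≤ Real.exp B₀ :=
    Real.exp_le_exp.2 (le_trans (le_abs_self _) (hB t ht))
  have hiP : (∫ τ in (0:ℝ)..t, Real.exp (-(∫ s in (0:ℝ)..τ, φ s)))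
      ≤ T * Real.exp B₀ := by
    have hmono : (∫ τ in (0:ℝ)..t, Real.exp (-(∫ s in (0:ℝ)..τ, φ s)))
        ≤ ∫ _τ in (0:ℝ)..t, Real.exp B₀ := by
      apply intervalIntegral.integral_mono_on ht.1
      · apply ContinuousOn.intervalIntegrable
        rw [uIcc_of_le ht.1]
        exact (Real.continuous_exp.comp_continuousOn hFc.neg).mono
          (Icc_subset_Icc le_rfl ht.2)
      · exact intervalIntegrable_const
      · intro x hx
        apply Real.exp_le_exp.2
        have := hB x (Icc_subset_Icc le_rfl ht.2 hx)
        have h2 := neg_le_abs (∫ s in (0:ℝ)..x, φ s)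
        linarith [abs_le.1 this |>.1]
    rw [intervalIntegral.integral_const, smul_eq_mul, sub_zero] at hmono
    have : t * Real.exp B₀ ≤ T * Real.exp B₀ :=
      mul_le_mul_of_nonneg_right ht.2 (Real.exp_pos _).le
    linarith
  have hiP0 : 0 ≤ (∫ τ in (0:ℝ)..t, Real.exp (-(∫ s in (0:ℝ)..τ, φ s))) := by
    apply intervalIntegral.integral_nonneg ht.1
    intro x _
    exact (Real.exp_pos _).le
  calc Real.exp (∫ s in (0:ℝ)..t, φ s) *
        (∫ τ in (0:ℝ)..t, Real.exp (-(∫ s in (0:ℝ)..τ, φ s)))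
      ≤ Real.exp B₀ * (T * Real.exp B₀) :=
    mul_le_mul hexpF hiP hiP0 (Real.exp_pos _).le

lemma bootstrap {T γ K₂ S D₁ D₂ δ : ℝ} (hT : 0 < T) (hγ : 1 < γ)
    (hK₂ : 0 < K₂) (hS0 : 0 ≤ S) (hδ : 0 < δ) (hD₁ : 0 ≤ D₁) (hD₂ : 0 ≤ D₂)
    {Ev Ew : ℝ → ℝ} (hEvc : ContinuousOn Ev (Icc 0 T)) (hEv0 : Ev 0 = 0)
    (hEwb : ∀ m, 0 ≤ m → ∀ t ∈ Icc (0:ℝ) T,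
      (∀ τ ∈ Icc (0:ℝ) t, |Ev τ| ≤ m) → |Ew t| ≤ m/γ + D₂)
    (hkey : ∀ m, 0 ≤ m → ∀ t ∈ Icc (0:ℝ) T,
      (∀ τ ∈ Icc (0:ℝ) t, |Ev τ| ≤ m) →
      |Ev t| ≤ S*(K₂*m^2 + m^3/3 + (m/γ + D₂)) + D₁)
    (hq : S*K₂*δ + S*δ^2/3 + S/γ ≤ 3/4)
    (hB : S*D₂ + D₁ ≤ δ/8) :
    ∀ t ∈ Icc (0:ℝ) T, |Ev t| ≤ 4*(S*D₂+D₁) ∧ |Ew t| ≤ 4*(S*D₂+D₁) + D₂ := by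
  have hγ0 : 0 < γ := lt_trans one_pos hγ
  -- the key estimate with m = δ implies a strict improvement
  have main : ∀ t ∈ Icc (0:ℝ) T, (∀ τ ∈ Icc (0:ℝ) t, |Ev τ| ≤ δ) →
      |Ev t| ≤ 7/8 * δ := by
    intro t ht hm
    have h := hkey δ hδ.le t ht hm
    have hexp : S*(K₂*δ^2 + δ^3/3 + (δ/γ + D₂)) + D₁
        = (S*K₂*δ + S*δ^2/3 + S/γ)*δ + (S*D₂ + D₁) := by
      field_simp
      ring
    rw [hexp] at h
    have h2 : (S*K₂*δ + S*δ^2/3 + S/γ)*δ ≤ 3/4*δ :=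
      mul_le_mul_of_nonneg_right hq hδ.le
    linarith
  -- global smallness: |Ev| ≤ δ on [0,T]
  have hglobal : ∀ t ∈ Icc (0:ℝ) T, |Ev t| ≤ δ := by
    by_contra hcon
    push_neg at hcon
    obtain ⟨t₁, ht₁, hgt⟩ := hcon
    set bad : Set ℝ := {t | t ∈ Icc (0:ℝ) T ∧ δ ≤ |Ev t|} with hbad
    have hbadne : bad.Nonempty := ⟨t₁, ht₁, hgt.le⟩
    have hbadcl : IsClosed bad := by
      have : bad = Icc (0:ℝ) T ∩ (fun t => |Ev t|) ⁻¹' (Ici δ) := by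
        ext x; simp [hbad, Set.mem_setOf_eq, and_comm]
      rw [this]
      exact hEvc.abs.preimage_isClosed_of_isClosed isClosed_Icc isClosed_Ici
    have hbadbdd : BddBelow bad := ⟨0, fun x hx => hx.1.1⟩
    set t₀ : ℝ := sInf bad with ht₀def
    have ht₀mem : t₀ ∈ bad := hbadcl.csInf_mem hbadne hbadbdd
    have ht₀Icc : t₀ ∈ Icc (0:ℝ) T := ht₀mem.1
    have ht₀δ : δ ≤ |Ev t₀| := ht₀mem.2
    have ht₀pos : 0 < t₀ := by
      rcases lt_or_eq_of_le ht₀Icc.1 with h | h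
      · exact h
      · exfalso; rw [← h] at ht₀δ; rw [hEv0] at ht₀δ; simp at ht₀δ; linarith
    have hbefore : ∀ s ∈ Ico (0:ℝ) t₀, |Ev s| ≤ δ := by
      intro s hs
      by_contra hcon2
      push_neg at hcon2
      have : s ∈ bad := ⟨⟨hs.1, le_trans hs.2.le ht₀Icc.2⟩, hcon2.le⟩
      have := csInf_le hbadbdd this
      exact absurd this (not_le.2 hs.2)
    -- |Ev t₀| ≤ δ by continuity from the left
    have hδt₀ : ∀ τ ∈ Icc (0:ℝ) t₀, |Ev τ| ≤ δ := by
      intro τ hτ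
      rcases lt_or_eq_of_le hτ.2 with h | h
      · exact hbefore τ ⟨hτ.1, h⟩
      · -- τ = t₀ : limit from the left
        rw [h]
        have hne : (𝓝[Ico (0:ℝ) t₀] t₀).NeBot := by
          apply mem_closure_iff_nhdsWithin_neBot.mp
          rw [closure_Ico ht₀pos.ne]
          exact ⟨ht₀pos.le, le_rfl⟩
        have htend : Filter.Tendsto (fun s => |Ev s|) (𝓝[Ico (0:ℝ) t₀] t₀)
            (𝓝 |Ev t₀|) := by
          have h1 : ContinuousWithinAt (fun s => |Ev s|) (Icc 0 T) t₀ :=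
            (hEvc t₀ ht₀Icc).abs
          exact h1.mono (fun x hx => ⟨hx.1, le_trans hx.2.le ht₀Icc.2⟩)
        exact le_of_tendsto htend
          (Filter.eventually_of_mem self_mem_nhdsWithin hbefore)
    have := main t₀ ht₀Icc hδt₀
    linarith
  -- maximum of |Ev| on [0,T]
  obtain ⟨tm, htm, hmax⟩ := isCompact_Icc.exists_isMaxOn
    (nonempty_Icc.2 hT.le) hEvc.abs
  set M : ℝ := |Ev tm| with hM
  have hM0 : 0 ≤ M := abs_nonneg _
  have hMδ : M ≤ δ := hglobal tm htm
  have hMle : ∀ τ ∈ Icc (0:ℝ) T, |Ev τ| ≤ M := fun τ hτ => hmax hτ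
  have hMkey := hkey M hM0 tm htm (fun τ hτ => hMle τ (Icc_subset_Icc le_rfl htm.2 hτ))
  have hM4B : M ≤ 4*(S*D₂+D₁) := by
    have e1 : S*K₂*M^2 ≤ S*K₂*δ*M := by
      nlinarith [mul_nonneg (mul_nonneg (mul_nonneg hS0 hK₂.le) hM0)
        (sub_nonneg.2 hMδ)]
    have e2 : S*M^3/3 ≤ S*δ^2/3*M := by
      have hM2 : M^2 ≤ δ^2 := by nlinarith
      nlinarith [mul_nonneg (mul_nonneg hS0 hM0) (sub_nonneg.2 hM2)]
    have e3 : S*(M/γ) = (S/γ)*M := by ring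
    have hcoef : (S*K₂*δ + S*δ^2/3 + S/γ)*M ≤ 3/4*M :=
      mul_le_mul_of_nonneg_right hq hM0
    have hexp : S*(K₂*M^2 + M^3/3 + (M/γ + D₂)) + D₁
        = S*K₂*M^2 + S*M^3/3 + (S/γ)*M + (S*D₂ + D₁) := by field_simp; ring
    rw [hexp] at hMkey
    nlinarith
  intro t ht
  constructor
  · exact le_trans (hMle t ht) hM4B
  · have := hEwb M hM0 t ht (fun τ hτ => hMle τ (Icc_subset_Icc le_rfl ht.2 hτ))
    have hMγ : M/γ ≤ M := by
      rw [div_le_iff₀ hγ0]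
      nlinarith
    linarith

end helpers

set_option maxHeartbeats 1000000 in
/-- **Lemma (Estimate for the general approximation-error equation).** -/
theorem stmt_9 (T ω₀ ε β γ ρ : ℝ) (hT : 0 < T) (hω₀ : 0 < ω₀)
    (hε : 0 < ε) (hβ : 0 < β) (hγ : 1 < γ)
    (φs φf φ₂ H₁ H₂ : ℝ → ℝ → ℝ) (Ev Ew : ℝ → ℝ → ℝ)
    (C₁ C₂ K₂ : ℝ) (hC₁ : 0 < C₁) (hC₂ : 0 < C₂) (hK₂ : 0 < K₂)
    (hcont : ∀ ω : ℝ, ω₀ ≤ ω →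
      ContinuousOn (φs ω) (Icc 0 T) ∧ ContinuousOn (φf ω) (Icc 0 T) ∧
      ContinuousOn (φ₂ ω) (Icc 0 T) ∧ ContinuousOn (H₁ ω) (Icc 0 T) ∧
      ContinuousOn (H₂ ω) (Icc 0 T))
    (h1 : ∀ ω : ℝ, ω₀ ≤ ω →
      (1 / γ) * (⨆ t : Icc (0:ℝ) T,
        ∫ τ in (0:ℝ)..(t : ℝ), Real.exp (∫ s in τ..(t : ℝ), (φs ω s + φf ω s))) < 1 / 2)
    (h2 : ∀ ω : ℝ, ω₀ ≤ ω → ∀ t ∈ Icc (0:ℝ) T,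
      |∫ τ in (0:ℝ)..t, Real.exp (∫ s in τ..t, (φs ω s + φf ω s)) * H₁ ω τ| ≤ C₁ / ω)
    (h3 : ∀ ω : ℝ, ω₀ ≤ ω → ∀ t ∈ Icc (0:ℝ) T,
      |∫ τ in (0:ℝ)..t, Real.exp (-(ε * γ) * (t - τ)) * H₂ ω τ| ≤ C₂ / ω)
    (h4 : ∀ ω : ℝ, ω₀ ≤ ω → ∀ t ∈ Icc (0:ℝ) T, |φ₂ ω t| ≤ K₂)
    (hE : ∀ ω : ℝ, ω₀ ≤ ω →
      ContinuousOn (Ev ω) (Icc 0 T) ∧ ContinuousOn (Ew ω) (Icc 0 T) ∧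
      Ev ω 0 = 0 ∧ Ew ω 0 = 0 ∧
      ∀ t ∈ Ioo (0:ℝ) T,
        HasDerivAt (Ev ω) ((φs ω t + φf ω t) * Ev ω t + φ₂ ω t * Ev ω t ^ 2
          - (1 / 3) * Ev ω t ^ 3 - Ew ω t + H₁ ω t) t ∧
        HasDerivAt (Ew ω) (ε * (Ev ω t - γ * Ew ω t) + H₂ ω t) t) :
    ∃ ωStar : ℝ, ω₀ ≤ ωStar ∧ ∃ C > (0:ℝ), ∀ ω : ℝ, ωStar ≤ ω →
      ∀ t ∈ Ioo (0:ℝ) T, |Ev ω t| ≤ C / ω ∧ |Ew ω t| ≤ C / ω := by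
  have hγ0 : 0 < γ := lt_trans one_pos hγ
  set δ : ℝ := min 1 (1/(2*γ*(K₂+1))) with hδdef
  have hδ : 0 < δ := lt_min one_pos (by positivity)
  have hδ1 : δ ≤ 1 := min_le_left _ _
  have hδ2 : δ ≤ 1/(2*γ*(K₂+1)) := min_le_right _ _
  clear_value δ
  set K : ℝ := (γ/2)*C₂ + C₁ with hKdef
  have hKpos : 0 < K := by positivity
  set R : ℝ := 8*K/δ with hRdef
  have hRpos : 0 < R := by positivity
  clear_value K R
  refine ⟨max ω₀ R, le_max_left _ _, 4*K + C₂, by positivity, ?_⟩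
  intro ω hω t ht
  have hω₀ω : ω₀ ≤ ω := le_trans (le_max_left _ _) hω
  have hωR : R ≤ ω := le_trans (le_max_right _ _) hω
  have hωpos : 0 < ω := lt_of_lt_of_le hRpos hωR
  obtain ⟨hφsc, hφfc, hφ₂c, hH₁c, hH₂c⟩ := hcont ω hω₀ω
  obtain ⟨hEvc, hEwc, hEv0, hEw0, hder⟩ := hE ω hω₀ω
  have hφc : ContinuousOn (fun s => φs ω s + φf ω s) (Icc 0 T) := hφsc.add hφfc
  -- the supremum S
  set S : ℝ := ⨆ t : Icc (0:ℝ) T,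
      ∫ τ in (0:ℝ)..(t : ℝ), Real.exp (∫ s in τ..(t : ℝ), (φs ω s + φf ω s)) with hSdef
  have hbdd := Abdd hT hφc
  have hSle : ∀ u ∈ Icc (0:ℝ) T,
      (∫ τ in (0:ℝ)..u, Real.exp (∫ s in τ..u, (φs ω s + φf ω s))) ≤ S := by
    intro u hu
    exact le_ciSup hbdd ⟨u, hu⟩
  have hS0 : 0 ≤ S := by
    have := hSle 0 ⟨le_rfl, hT.le⟩
    simpa using this
  have hSγ : S < γ/2 := by
    have h : 1/γ * S < 1/2 := by
      rw [hSdef]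
      exact h1 ω hω₀ω
    have h2 : γ * (1/γ * S) < γ * (1/2) := (mul_lt_mul_iff_right₀ hγ0).2 h
    have h3 : γ * (1/γ * S) = S := by field_simp
    linarith
  clear_value S
  -- derivative hypotheses in the normalized form
  have hdEv : ∀ x ∈ Ioo (0:ℝ) T, HasDerivAt (Ev ω)
      ((φs ω x + φf ω x) * Ev ω x + (φ₂ ω x * Ev ω x ^ 2 - 1/3 * Ev ω x ^ 3
        - Ew ω x + H₁ ω x)) x := by
    intro x hx
    have h := (hder x hx).1
    have heq : (φs ω x + φf ω x) * Ev ω x + φ₂ ω x * Ev ω x ^ 2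
        - (1 / 3) * Ev ω x ^ 3 - Ew ω x + H₁ ω x
        = (φs ω x + φf ω x) * Ev ω x + (φ₂ ω x * Ev ω x ^ 2 - 1/3 * Ev ω x ^ 3
          - Ew ω x + H₁ ω x) := by ring
    exact heq ▸ h
  have hdEw : ∀ x ∈ Ioo (0:ℝ) T, HasDerivAt (Ew ω)
      ((-(ε*γ)) * Ew ω x + (ε * Ev ω x + H₂ ω x)) x := by
    intro x hx
    have h := (hder x hx).2
    have heq : ε * (Ev ω x - γ * Ew ω x) + H₂ ω x
        = (-(ε*γ)) * Ew ω x + (ε * Ev ω x + H₂ ω x) := by ring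
    exact heq ▸ h
  -- Duhamel formulas
  have hNc : ContinuousOn (fun τ => φ₂ ω τ * Ev ω τ ^ 2 - 1/3 * Ev ω τ ^ 3
      - Ew ω τ + H₁ ω τ) (Icc 0 T) :=
    (((hφ₂c.mul (hEvc.pow 2)).sub (continuousOn_const.mul (hEvc.pow 3))).sub hEwc).add hH₁c
  have hd := duhamel hT (fun s => φs ω s + φf ω s) _ (Ev ω) hφc hNc hEvc hEv0 hdEv
  have hfor := ew_formula' hT hε hγ hH₂c hEvc hEwc hEw0 hdEw
  -- the two estimates
  have hEwb := ew_bound_lem hT hε hγ hH₂c hEvc hfor (h3 ω hω₀ω)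
  have hkey := key_lem hT hγ hK₂ hφc hφ₂c hH₁c hEvc hEwc hd hSle (h2 ω hω₀ω)
    (h4 ω hω₀ω) hEwb (by positivity : (0:ℝ) ≤ C₂/ω)
  -- arithmetic smallness conditions
  have hq : S*K₂*δ + S*δ^2/3 + S/γ ≤ 3/4 := by
    have e0 : S*δ^2/3 ≤ S*δ/3 := by
      nlinarith [mul_nonneg (mul_nonneg hS0 hδ.le) (sub_nonneg.2 hδ1)]
    have e1 : S*K₂*δ + S*δ/3 ≤ S*(K₂+1)*δ := by
      nlinarith [mul_nonneg hS0 hδ.le]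
    have e2 : S*(K₂+1)*δ ≤ (γ/2)*(K₂+1)*δ := by
      nlinarith [mul_nonneg (mul_nonneg (sub_nonneg.2 hSγ.le)
        (by positivity : (0:ℝ) ≤ K₂+1)) hδ.le]
    have e3 : (γ/2)*(K₂+1)*δ ≤ (γ/2)*(K₂+1)*(1/(2*γ*(K₂+1))) := by
      nlinarith [mul_nonneg (by positivity : (0:ℝ) ≤ (γ/2)*(K₂+1))
        (sub_nonneg.2 hδ2)]
    have e4 : (γ/2)*(K₂+1)*(1/(2*γ*(K₂+1))) = 1/4 := by field_simp; ring
    have e5 : S/γ ≤ 1/2 := by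
      rw [div_le_iff₀ hγ0]; nlinarith
    linarith
  have hnum : S*C₂ + C₁ ≤ K := by
    rw [hKdef]
    nlinarith [mul_le_mul_of_nonneg_right hSγ.le hC₂.le]
  have hB : S*(C₂/ω) + C₁/ω ≤ δ/8 := by
    have e1 : S*(C₂/ω) + C₁/ω = (S*C₂ + C₁)/ω := by field_simp
    have e2 : (S*C₂ + C₁)/ω ≤ K/ω := by gcongr
    have e3 : K/ω ≤ K/R := by gcongr
    have e4 : K/R = δ/8 := by
      rw [hRdef]
      field_simp
      all_goals ring
    linarith
  -- apply the bootstrap lemma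
  have hboot := bootstrap hT hγ hK₂ hS0 hδ (by positivity : (0:ℝ) ≤ C₁/ω)
    (by positivity : (0:ℝ) ≤ C₂/ω) hEvc hEv0 hEwb hkey hq hB
  obtain ⟨hv, hw⟩ := hboot t (Ioo_subset_Icc_self ht)
  have hv4 : 4*(S*(C₂/ω)+C₁/ω) = (4*(S*C₂+C₁))/ω := by
    field_simp
    all_goals ring
  constructor
  · refine le_trans hv ?_
    rw [hv4]
    have : 4*(S*C₂+C₁) ≤ 4*K + C₂ := by nlinarith
    gcongr
  · refine le_trans hw ?_
    have e5 : 4*(S*(C₂/ω)+C₁/ω) + C₂/ω = (4*(S*C₂+C₁)+C₂)/ω := by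
      field_simp
      all_goals ring
    rw [e5]
    have : 4*(S*C₂+C₁)+C₂ ≤ 4*K + C₂ := by nlinarith
    gcongr
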